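/- For every t ≥ 2 and every even r ≥ 2, there exist N = C((tr-2)/2, r-1) · 2^{r-1} matchings of size t in an r-uniform hypergraph on tr vertices which admit no rainbow matching of size t. -/

import Mathlib

namespace Stmt13

open Finset

variable {s q T : ℕ}

def Pn (s q T : ℕ) : ℕ := s + T * q

abbrev V (s q T : ℕ) := (Fin (Pn s q T) × Bool) ⊕ Fin 2

structure Idx (s q T : ℕ) where
  S : Finset (Fin (Pn s q T))
  hS : S.card = s
  o : Fin s → Bool

namespace Idx

variable (d : Idx s q T)

noncomputable def pi : Fin s → Fin (Pn s q T) := fun m => ↑(d.S.orderIsoOfFin d.hS m)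

lemma pi_injective : Function.Injective d.pi := fun m m' h =>
  (d.S.orderIsoOfFin d.hS).injective (Subtype.coe_injective h)

lemma pi_mem (m : Fin s) : d.pi m ∈ d.S := (d.S.orderIsoOfFin d.hS m).2

lemma pi_surj {p} (hp : p ∈ d.S) : ∃ m, d.pi m = p := by
  obtain ⟨m, hm⟩ := (d.S.orderIsoOfFin d.hS).surjective ⟨p, hp⟩
  exact ⟨m, congrArg Subtype.val hm⟩

noncomputable def X : Finset (Fin (Pn s q T) × Bool) :=
  univ.image fun m => (d.pi m, d.o m)

lemma mem_X {v} : v ∈ d.X ↔ ∃ m, (d.pi m, d.o m) = v := by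
  simp [X]

lemma X_card : d.X.card = s := by
  rw [X, card_image_of_injective _ (fun m m' h => d.pi_injective (congrArg Prod.fst h))]
  simp

lemma X_fst_mem {p b} (h : (p, b) ∈ d.X) : p ∈ d.S := by
  obtain ⟨m, hm⟩ := d.mem_X.1 h
  simp only [Prod.mk.injEq] at hm
  exact hm.1 ▸ d.pi_mem m

lemma X_unique {p b b'} (h : (p, b) ∈ d.X) (h' : (p, b') ∈ d.X) : b = b' := by
  obtain ⟨m, hm⟩ := d.mem_X.1 h
  obtain ⟨m', hm'⟩ := d.mem_X.1 h'
  simp only [Prod.mk.injEq] at hm hm'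
  have : m = m' := d.pi_injective (hm.1.trans hm'.1.symm)
  rw [← hm.2, ← hm'.2, this]

lemma X_inj {d d' : Idx s q T} (h : d.X = d'.X) : d = d' := by
  have hS : d.S = d'.S := by
    ext p
    constructor
    · intro hp
      obtain ⟨m, hm⟩ := d.pi_surj hp
      have : (d.pi m, d.o m) ∈ d'.X := h ▸ d.mem_X.2 ⟨m, rfl⟩
      exact hm ▸ X_fst_mem d' this
    · intro hp
      obtain ⟨m, hm⟩ := d'.pi_surj hp
      have : (d'.pi m, d'.o m) ∈ d.X := h ▸ d'.mem_X.2 ⟨m, rfl⟩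
      exact hm ▸ X_fst_mem d this
  obtain ⟨S1, h1, o1⟩ := d
  obtain ⟨S2, h2, o2⟩ := d'
  dsimp at hS
  subst hS
  have hpi : (Idx.mk S1 h1 o1).pi = (Idx.mk S1 h2 o2).pi := rfl
  congr 1
  funext m
  have hm : ((Idx.mk S1 h1 o1).pi m, o1 m) ∈ (Idx.mk S1 h2 o2).X :=
    h ▸ (Idx.mk S1 h1 o1).mem_X.2 ⟨m, rfl⟩
  obtain ⟨m', hm'⟩ := (Idx.mk S1 h2 o2).mem_X.1 hm
  simp only [Prod.mk.injEq] at hm'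
  have : m' = m := (Idx.mk S1 h2 o2).pi_injective (hm'.1.trans (congrFun hpi m).symm)
  rw [← hm'.2, this]

lemma compl_card : d.Sᶜ.card = T * q := by
  rw [Finset.card_compl, d.hS, Fintype.card_fin]
  simp [Pn]

noncomputable def g : Fin (T * q) → Fin (Pn s q T) := fun m => ↑(d.Sᶜ.orderIsoOfFin d.compl_card m)

lemma g_injective : Function.Injective d.g := fun m m' h =>
  (d.Sᶜ.orderIsoOfFin d.compl_card).injective (Subtype.coe_injective h)

lemma g_not_mem (m) : d.g m ∉ d.S := by
  have : d.g m ∈ d.Sᶜ := (d.Sᶜ.orderIsoOfFin d.compl_card m).2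
  simpa using this

noncomputable def grp (k : Fin T) : Finset (Fin (Pn s q T)) :=
  univ.image fun m : Fin q => d.g (finProdFinEquiv (k, m))

lemma mem_grp {k p} : p ∈ d.grp k ↔ ∃ m, d.g (finProdFinEquiv (k, m)) = p := by
  simp [grp]

lemma grp_card (k) : (d.grp k).card = q := by
  rw [grp, card_image_of_injective, card_univ, Fintype.card_fin]
  intro m m' h
  have := finProdFinEquiv.injective (d.g_injective h)
  exact (Prod.ext_iff.1 this).2

lemma grp_not_mem_S {k p} (h : p ∈ d.grp k) : p ∉ d.S := by
  obtain ⟨m, rfl⟩ := d.mem_grp.1 h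
  exact d.g_not_mem _

lemma grp_disjoint {k k'} (h : k ≠ k') : Disjoint (d.grp k) (d.grp k') := by
  rw [disjoint_left]
  intro p hp hp'
  obtain ⟨m, hm⟩ := d.mem_grp.1 hp
  obtain ⟨m', hm'⟩ := d.mem_grp.1 hp'
  have := finProdFinEquiv.injective (d.g_injective (hm.trans hm'.symm))
  exact h (Prod.ext_iff.1 this).1

end Idx

def a0 : V s q T := Sum.inr 0
def a1 : V s q T := Sum.inr 1

namespace Idx

variable (d : Idx s q T)

noncomputable def eA : Finset (V s q T) := insert a0 (d.X.image Sum.inl)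

noncomputable def eA' : Finset (V s q T) :=
  insert a1 ((d.X.image fun w => (w.1, !w.2)).image Sum.inl)

noncomputable def eP (k : Fin T) : Finset (V s q T) :=
  (d.grp k ×ˢ (univ : Finset Bool)).image Sum.inl

lemma inl_mem_eA {v} : Sum.inl v ∈ d.eA ↔ v ∈ d.X := by
  simp [eA, a0]

lemma inl_mem_eA' {v : Fin (Pn s q T) × Bool} : Sum.inl v ∈ d.eA' ↔ (v.1, !v.2) ∈ d.X := by
  simp only [eA', a1, mem_insert, mem_image]
  constructor
  · rintro (h | ⟨w, ⟨u, hu, rfl⟩, hw⟩)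
    · exact absurd h (by simp)
    · obtain rfl : u = (v.1, !v.2) := by
        have := Sum.inl_injective hw
        rw [← this]; simp
      exact hu
  · intro h
    exact Or.inr ⟨v, ⟨(v.1, !v.2), h, by simp⟩, rfl⟩

lemma inl_mem_eP {k p b} : Sum.inl (p, b) ∈ d.eP k ↔ p ∈ d.grp k := by
  simp [eP]

lemma a0_mem_eA : a0 ∈ d.eA := mem_insert_self _ _

lemma a1_mem_eA' : a1 ∈ d.eA' := mem_insert_self _ _

lemma a0_not_mem_eA' : (a0 : V s q T) ∉ d.eA' := by
  simp [eA', a0, a1, Fin.ext_iff]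

lemma a1_not_mem_eA : (a1 : V s q T) ∉ d.eA := by
  simp [eA, a0, a1, Fin.ext_iff]

lemma inr_not_mem_eP (k) (j : Fin 2) : (Sum.inr j : V s q T) ∉ d.eP k := by
  simp [eP]

lemma a0_not_mem_eP (k) : (a0 : V s q T) ∉ d.eP k := d.inr_not_mem_eP k 0

lemma a1_not_mem_eP (k) : (a1 : V s q T) ∉ d.eP k := d.inr_not_mem_eP k 1

lemma card_eA : d.eA.card = s + 1 := by
  rw [eA, card_insert_of_notMem (by simp [a0]),
    card_image_of_injective _ Sum.inl_injective, d.X_card]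

lemma card_eA' : d.eA'.card = s + 1 := by
  rw [eA', card_insert_of_notMem (by simp [a1]),
    card_image_of_injective _ Sum.inl_injective,
    card_image_of_injective, d.X_card]
  intro w w' h
  rw [Prod.ext_iff] at h ⊢
  exact ⟨h.1, by have := h.2; simpa using congrArg (!·) this⟩

lemma card_eP (k) : (d.eP k).card = q * 2 := by
  rw [eP, card_image_of_injective _ Sum.inl_injective, card_product, d.grp_card]
  simp

lemma disj_eA_eA' : Disjoint d.eA d.eA' := by
  rw [disjoint_left]
  rintro (⟨p, b⟩ | j) hv hv'
  · have h1 := d.inl_mem_eA.1 hv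
    have h2 := d.inl_mem_eA'.1 hv'
    have := d.X_unique h1 h2
    simp at this
  · rw [eA, mem_insert] at hv
    rw [eA', mem_insert] at hv'
    rcases hv with h | h
    · rcases hv' with h' | h'
      · rw [a0] at h; rw [a1] at h'
        have := (Sum.inr_injective (h.symm.trans h'))
        simp [Fin.ext_iff] at this
      · simp at h'
    · simp at h

lemma disj_eA_eP (k) : Disjoint d.eA (d.eP k) := by
  rw [disjoint_left]
  rintro (⟨p, b⟩ | j) hv hv'
  · exact d.grp_not_mem_S (d.inl_mem_eP.1 hv') (d.X_fst_mem (d.inl_mem_eA.1 hv))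
  · exact d.inr_not_mem_eP k j hv'

lemma disj_eA'_eP (k) : Disjoint d.eA' (d.eP k) := by
  rw [disjoint_left]
  rintro (⟨p, b⟩ | j) hv hv'
  · exact d.grp_not_mem_S (d.inl_mem_eP.1 hv') (d.X_fst_mem (d.inl_mem_eA'.1 hv))
  · exact d.inr_not_mem_eP k j hv'

lemma disj_eP_eP {k k'} (h : k ≠ k') : Disjoint (d.eP k) (d.eP k') := by
  rw [disjoint_left]
  rintro (⟨p, b⟩ | j) hv hv'
  · exact (disjoint_left.1 (d.grp_disjoint h)) (d.inl_mem_eP.1 hv) (d.inl_mem_eP.1 hv')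
  · exact d.inr_not_mem_eP k j hv

lemma grp_nonempty (hq : 1 ≤ q) (k) : (d.grp k).Nonempty := by
  refine ⟨d.g (finProdFinEquiv (k, ⟨0, hq⟩)), ?_⟩
  exact d.mem_grp.2 ⟨⟨0, hq⟩, rfl⟩

lemma eP_injective (hq : 1 ≤ q) : Function.Injective d.eP := by
  intro k k' h
  by_contra hne
  obtain ⟨p, hp⟩ := d.grp_nonempty hq k
  have h1 : Sum.inl (p, true) ∈ d.eP k := d.inl_mem_eP.2 hp
  have h2 : Sum.inl (p, true) ∈ d.eP k' := h ▸ h1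
  exact (disjoint_left.1 (d.disj_eP_eP hne)) h1 h2

lemma eA_ne_eA' : d.eA ≠ d.eA' := fun h => d.a1_not_mem_eA (h ▸ d.a1_mem_eA')

lemma eA_ne_eP (k) : d.eA ≠ d.eP k := fun h => d.a0_not_mem_eP k (h ▸ d.a0_mem_eA)

lemma eA'_ne_eP (k) : d.eA' ≠ d.eP k := fun h => d.a1_not_mem_eP k (h ▸ d.a1_mem_eA')

noncomputable def Mv : Finset (Finset (V s q T)) :=
  insert d.eA (insert d.eA' (univ.image d.eP))

lemma mem_Mv {e} : e ∈ d.Mv ↔ e = d.eA ∨ e = d.eA' ∨ ∃ k, e = d.eP k := by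
  simp [Mv, eq_comm]

lemma card_Mv (hq : 1 ≤ q) : d.Mv.card = T + 2 := by
  rw [Mv, card_insert_of_notMem, card_insert_of_notMem,
    card_image_of_injective _ (d.eP_injective hq), card_univ, Fintype.card_fin]
  · simp only [mem_image, not_exists]
    intro k hk
    exact d.eA'_ne_eP k hk.2.symm
  · simp only [mem_insert, mem_image, not_or, not_exists]
    refine ⟨d.eA_ne_eA', fun k hk => d.eA_ne_eP k hk.2.symm⟩

end Idx

noncomputable def eqS (s q T : ℕ) :
    Fin (Nat.choose (Pn s q T) s) ≃ {A : Finset (Fin (Pn s q T)) // A.card = s} :=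
  (Fintype.equivFinOfCardEq (by simp [Fintype.card_finset_len])).symm

noncomputable def eqO (s : ℕ) : Fin (2 ^ s) ≃ (Fin s → Bool) :=
  (Fintype.equivFinOfCardEq (by simp)).symm

noncomputable def decode (s q T : ℕ) (j : Fin (Nat.choose (Pn s q T) s * 2 ^ s)) :
    Idx s q T :=
  ⟨(eqS s q T (finProdFinEquiv.symm j).1).1, (eqS s q T (finProdFinEquiv.symm j).1).2,
    eqO s (finProdFinEquiv.symm j).2⟩

lemma decode_injective (s q T : ℕ) : Function.Injective (decode s q T) := by
  intro j j' h
  have hS : ((eqS s q T (finProdFinEquiv.symm j).1) : Finset (Fin (Pn s q T)))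
      = (eqS s q T (finProdFinEquiv.symm j').1) := congrArg Idx.S h
  have ho : eqO s (finProdFinEquiv.symm j).2 = eqO s (finProdFinEquiv.symm j').2 :=
    congrArg Idx.o h
  have h1 : (finProdFinEquiv.symm j).1 = (finProdFinEquiv.symm j').1 :=
    (eqS s q T).injective (Subtype.ext hS)
  have h2 : (finProdFinEquiv.symm j).2 = (finProdFinEquiv.symm j').2 :=
    (eqO s).injective ho
  have : (finProdFinEquiv.symm j) = (finProdFinEquiv.symm j') := Prod.ext h1 h2
  exact finProdFinEquiv.symm.injective this

theorem master (s q T : ℕ) (hq : 1 ≤ q) (hs : s + 1 = 2 * q) :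
    ∃ M : Fin (Nat.choose (Pn s q T) s * 2 ^ s) → Finset (Finset (V s q T)),
      (∀ j, (M j).card = T + 2) ∧
      (∀ j, ∀ e ∈ M j, e.card = s + 1) ∧
      (∀ j, ∀ e ∈ M j, ∀ f ∈ M j, e ≠ f → Disjoint e f) ∧
      ¬ ∃ (i : Fin (T + 2) → Fin (Nat.choose (Pn s q T) s * 2 ^ s))
          (e : Fin (T + 2) → Finset (V s q T)),
        Function.Injective i ∧ (∀ k, e k ∈ M (i k)) ∧
        ∀ k l, k ≠ l → Disjoint (e k) (e l) := by
  refine ⟨fun j => (decode s q T j).Mv, fun j => (decode s q T j).card_Mv hq, ?_, ?_, ?_⟩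
  · intro j e he
    rcases (decode s q T j).mem_Mv.1 he with rfl | rfl | ⟨k, rfl⟩
    · exact Idx.card_eA _
    · exact Idx.card_eA' _
    · rw [Idx.card_eP]; omega
  · intro j e he f hf hne
    rcases (decode s q T j).mem_Mv.1 he with rfl | rfl | ⟨k, rfl⟩ <;>
      rcases (decode s q T j).mem_Mv.1 hf with rfl | rfl | ⟨k', rfl⟩
    · exact absurd rfl hne
    · exact Idx.disj_eA_eA' _
    · exact Idx.disj_eA_eP _ _
    · exact (Idx.disj_eA_eA' _).symm
    · exact absurd rfl hne
    · exact Idx.disj_eA'_eP _ _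
    · exact (Idx.disj_eA_eP _ _).symm
    · exact (Idx.disj_eA'_eP _ _).symm
    · exact Idx.disj_eP_eP _ (fun h => hne (by rw [h]))
  · rintro ⟨i, e, hi, hmem, hdisj⟩
    -- the union of the edges is everything
    have hcard : ∀ k, (e k).card = s + 1 := by
      intro k
      rcases (decode s q T (i k)).mem_Mv.1 (hmem k) with h | h | ⟨kk, h⟩
      · rw [h]; exact Idx.card_eA _
      · rw [h]; exact Idx.card_eA' _
      · rw [h, Idx.card_eP]; omega
    have hV : Fintype.card (V s q T) = (T + 2) * (s + 1) := by
      have : (T + 2) * (s + 1) = (T * (2 * q) + 2 * (s + 1)) := by rw [hs]; ring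
      simp only [V, Fintype.card_sum, Fintype.card_prod, Fintype.card_fin,
        Fintype.card_bool]
      simp only [Pn]
      rw [this]; linarith [hs]
    have hU : (univ : Finset (Fin (T + 2))).biUnion e = univ := by
      apply eq_univ_of_card
      rw [card_biUnion (fun k _ l _ hkl => hdisj k l hkl), hV]
      rw [Finset.sum_congr rfl (fun k _ => hcard k)]
      simp [mul_comm]
    have hmem_univ : ∀ v : V s q T, ∃ k, v ∈ e k := by
      intro v
      have : v ∈ (univ : Finset (Fin (T + 2))).biUnion e := hU ▸ mem_univ v
      obtain ⟨k, _, hk⟩ := mem_biUnion.1 this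
      exact ⟨k, hk⟩
    obtain ⟨k0, hk0⟩ := hmem_univ a0
    obtain ⟨k1, hk1⟩ := hmem_univ a1
    have he0 : e k0 = (decode s q T (i k0)).eA := by
      rcases (decode s q T (i k0)).mem_Mv.1 (hmem k0) with h | h | ⟨kk, h⟩
      · exact h
      · exact absurd (h ▸ hk0) (Idx.a0_not_mem_eA' _)
      · exact absurd (h ▸ hk0) (Idx.a0_not_mem_eP _ _)
    have he1 : e k1 = (decode s q T (i k1)).eA' := by
      rcases (decode s q T (i k1)).mem_Mv.1 (hmem k1) with h | h | ⟨kk, h⟩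
      · exact absurd (h ▸ hk1) (Idx.a1_not_mem_eA _)
      · exact h
      · exact absurd (h ▸ hk1) (Idx.a1_not_mem_eP _ _)
    have hk01 : k0 ≠ k1 := by
      intro hk
      have : (a1 : V s q T) ∈ e k0 := hk ▸ hk1
      rw [he0] at this
      exact Idx.a1_not_mem_eA _ this
    set d0 := decode s q T (i k0) with hd0
    set d1 := decode s q T (i k1) with hd1
    have hXsub : d0.X ⊆ d1.X := by
      rintro ⟨p, b⟩ hv
      have hinl : Sum.inl (p, b) ∈ e k0 := by rw [he0]; exact d0.inl_mem_eA.2 hv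
      obtain ⟨k, hk⟩ := hmem_univ (Sum.inl (p, !b))
      by_cases hkk0 : k = k0
      · subst hkk0
        rw [he0] at hk
        have := d0.X_unique hv (d0.inl_mem_eA.1 hk)
        simp at this
      by_cases hkk1 : k = k1
      · subst hkk1
        rw [he1] at hk
        have := d1.inl_mem_eA'.1 hk
        simpa using this
      rcases (decode s q T (i k)).mem_Mv.1 (hmem k) with h | h | ⟨kk, h⟩
      · have ha : (a0 : V s q T) ∈ e k := h ▸ Idx.a0_mem_eA _
        exact absurd hk0 (disjoint_left.1 (hdisj k k0 hkk0) ha ·)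
      · have ha : (a1 : V s q T) ∈ e k := h ▸ Idx.a1_mem_eA' _
        exact absurd hk1 (disjoint_left.1 (hdisj k k1 hkk1) ha ·)
      · have hg : p ∈ (decode s q T (i k)).grp kk := by
          rw [h] at hk
          exact (Idx.inl_mem_eP _).1 hk
        have : Sum.inl (p, b) ∈ e k := by
          rw [h]; exact (Idx.inl_mem_eP _).2 hg
        exact absurd hinl (disjoint_left.1 (hdisj k k0 hkk0) this ·)
    have hXeq : d0.X = d1.X :=
      eq_of_subset_of_card_le hXsub (by rw [d0.X_card, d1.X_card])
    have : i k0 = i k1 := decode_injective s q T (Idx.X_inj hXeq)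
    exact hk01 (hi this)

end Stmt13


theorem stmt13 (t r : ℕ) (ht : 2 ≤ t) (hr : 2 ≤ r) (hre : Even r) :
    ∃ M : Fin (Nat.choose ((t * r - 2) / 2) (r - 1) * 2 ^ (r - 1)) →
        Finset (Finset (Fin (t * r))),
      (∀ j, (M j).card = t) ∧
      (∀ j, ∀ e ∈ M j, e.card = r) ∧
      (∀ j, ∀ e ∈ M j, ∀ f ∈ M j, e ≠ f → Disjoint e f) ∧
      ¬ ∃ (i : Fin t → Fin (Nat.choose ((t * r - 2) / 2) (r - 1) * 2 ^ (r - 1)))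
          (e : Fin t → Finset (Fin (t * r))),
        Function.Injective i ∧ (∀ k, e k ∈ M (i k)) ∧
        ∀ k l, k ≠ l → Disjoint (e k) (e l) := by
  classical
  obtain ⟨q, hq2⟩ := hre
  set s := r - 1 with hsdef
  set T := t - 2 with hTdef
  have hq : 1 ≤ q := by omega
  have hs : s + 1 = 2 * q := by omega
  have ht2 : T + 2 = t := by omega
  have htr : t * r = 2 * Stmt13.Pn s q T + 2 := by
    have h1 : t = T + 2 := by omega
    have h2 : r = 2 * q := by omega
    rw [h1, h2]
    show (T + 2) * (2 * q) = 2 * (s + T * q) + 2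
    calc (T + 2) * (2 * q) = T * (2 * q) + 2 * (2 * q) := by ring
      _ = T * (2 * q) + 2 * (s + 1) := by rw [hs]
      _ = 2 * (s + T * q) + 2 := by ring
  have hdiv : (t * r - 2) / 2 = Stmt13.Pn s q T := by rw [htr]; omega
  have hN : Nat.choose ((t * r - 2) / 2) s * 2 ^ s
      = Nat.choose (Stmt13.Pn s q T) s * 2 ^ s := by rw [hdiv]
  have hV : Fintype.card (Stmt13.V s q T) = t * r := by
    rw [htr]
    simp only [Stmt13.V, Fintype.card_sum, Fintype.card_prod, Fintype.card_fin,
      Fintype.card_bool]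
    simp only [Stmt13.Pn]
    ring
  obtain ⟨M', h1, h2, h3, h4⟩ := Stmt13.master s q T hq hs
  let ee : Stmt13.V s q T ≃ Fin (t * r) := Fintype.equivFinOfCardEq hV
  let F : Finset (Stmt13.V s q T) ↪ Finset (Fin (t * r)) :=
    ⟨fun A => A.map ee.toEmbedding, Finset.map_injective _⟩
  refine ⟨fun j => (M' (finCongr hN j)).map F, ?_, ?_, ?_, ?_⟩
  · intro j
    rw [Finset.card_map, h1, ht2]
  · intro j e he
    obtain ⟨f, hf, rfl⟩ := Finset.mem_map.1 he
    have := h2 _ _ hf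
    show (f.map ee.toEmbedding).card = r
    rw [Finset.card_map, this]
    omega
  · intro j e he f hf hne
    obtain ⟨f1, hf1, rfl⟩ := Finset.mem_map.1 he
    obtain ⟨f2, hf2, rfl⟩ := Finset.mem_map.1 hf
    have hne' : f1 ≠ f2 := fun h => hne (by rw [h])
    exact (Finset.disjoint_map _).2 (h3 _ _ hf1 _ hf2 hne')
  · rintro ⟨i, e, hi, hmem, hdisj⟩
    apply h4
    have hch : ∀ k, ∃ f ∈ M' (finCongr hN (i k)), F f = e k := fun k =>
      Finset.mem_map.1 (hmem k)
    choose f hf1 hf2 using hch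
    refine ⟨fun k => finCongr hN (i (finCongr ht2 k)), fun k => f (finCongr ht2 k),
      ?_, fun k => hf1 _, ?_⟩
    · intro a b hab
      exact (finCongr ht2).injective (hi ((finCongr hN).injective hab))
    · intro k l hkl
      have hne : finCongr ht2 k ≠ finCongr ht2 l := fun h => hkl ((finCongr ht2).injective h)
      have hd := hdisj _ _ hne
      rw [← hf2, ← hf2] at hd
      exact (Finset.disjoint_map _).1 hd
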